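/- Fix strikes 0 < K_1 < … < K_N and a barrier U > 0. Let σ^* = (σ^*_1, σ^*_2) with σ^*_1, σ^*_2 > 0, let Σ^{σ^*} be the PCLVG implied volatility surface for σ^*, and suppose there is an index i with K_i < U such that the index j̄ = min{ j : K_j ≥ U + (U−K_i)·σ^*_2/σ^*_1 } is well defined. Let T > 0, let 0 < S ≤ U, and let Σ : {K_1,…,K_N} × (0,T] → (0,∞) satisfy the upper beliefs generated by Σ^{σ^*} on (0,T]. Then for every τ ∈ (0,T], P^bs(S, K_i, τ, Σ(K_i,τ)) − (K_i/U) · C^bs(S, K_{j̄}, τ, Σ(K_{j̄},τ)) > 0. -/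

import Mathlib

open MeasureTheory Filter Set

/-- Standard normal cumulative distribution function. -/
noncomputable def stdNormalCDF (x : ℝ) : ℝ :=
  (Real.sqrt (2 * Real.pi))⁻¹ * ∫ y in Set.Iic x, Real.exp (-(y ^ 2) / 2)

/-- Black–Scholes call price with zero interest and dividend rates. -/
noncomputable def bsCall (S K τ σ : ℝ) : ℝ :=
  let d1 := (Real.log (S / K) + σ ^ 2 * τ / 2) / (σ * Real.sqrt τ)
  S * stdNormalCDF d1 - K * stdNormalCDF (d1 - σ * Real.sqrt τ)

/-- Black–Scholes put price with zero interest and dividend rates. -/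
noncomputable def bsPut (S K τ σ : ℝ) : ℝ := bsCall S K τ σ - S + K

/-- The denominator appearing in the PCLVG call price formula. -/
noncomputable def pclvgD (σ1 σ2 U τ : ℝ) : ℝ :=
  1 / σ1 + 1 / σ2 - (1 / σ2 - 1 / σ1) * Real.exp (-2 * U / (σ1 * τ))

/-- The explicit PCLVG call price `C^σ(U,K,τ)`. -/
noncomputable def pclvgCall (σ1 σ2 U K τ : ℝ) : ℝ :=
  if K < U then
    (U - K) +
      τ * Real.exp (-(U - K) / (σ1 * τ)) * (1 - Real.exp (-2 * K / (σ1 * τ))) /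
        pclvgD σ1 σ2 U τ
  else
    τ * Real.exp (-(K - U) / (σ2 * τ)) * (1 - Real.exp (-2 * U / (σ1 * τ))) /
      pclvgD σ1 σ2 U τ

/-- The PCLVG put price `P^σ(U,K,τ) = C^σ(U,K,τ) − (U − K)`. -/
noncomputable def pclvgPut (σ1 σ2 U K τ : ℝ) : ℝ := pclvgCall σ1 σ2 U K τ - (U - K)

lemma gauss_integrable : Integrable (fun y : ℝ => Real.exp (-(y ^ 2) / 2)) := by
  have := integrable_exp_neg_mul_sq (by norm_num : (0:ℝ) < 1/2)
  convert this using 2 with y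
  ring_nf

lemma gauss_pos (y : ℝ) : 0 < Real.exp (-(y ^ 2) / 2) := Real.exp_pos _

lemma stdNormalCDF_nonneg (x : ℝ) : 0 ≤ stdNormalCDF x := by
  apply mul_nonneg (by positivity)
  exact setIntegral_nonneg measurableSet_Iic (fun y _ => (gauss_pos y).le)

lemma gauss_total : ∫ y : ℝ, Real.exp (-(y ^ 2) / 2) = Real.sqrt (2 * Real.pi) := by
  have := integral_gaussian (1/2)
  have h2 : ∫ y : ℝ, Real.exp (-(y ^ 2) / 2) = ∫ y : ℝ, Real.exp (-(1/2) * y ^ 2) := by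
    congr 1 with y; ring_nf
  have h3 : Real.pi / (1/2) = 2 * Real.pi := by ring
  rw [h2, this, h3]

lemma stdNormalCDF_le_one (x : ℝ) : stdNormalCDF x ≤ 1 := by
  have h := setIntegral_le_integral (μ := volume) (s := Set.Iic x) gauss_integrable
    (Filter.Eventually.of_forall fun y => (gauss_pos y).le)
  rw [stdNormalCDF]
  calc (Real.sqrt (2*Real.pi))⁻¹ * ∫ y in Set.Iic x, Real.exp (-(y ^ 2) / 2)
      ≤ (Real.sqrt (2*Real.pi))⁻¹ * ∫ y : ℝ, Real.exp (-(y ^ 2) / 2) := by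
        apply mul_le_mul_of_nonneg_left h (by positivity)
    _ = 1 := by rw [gauss_total]; field_simp

lemma hasDerivAt_stdNormalCDF (x : ℝ) :
    HasDerivAt stdNormalCDF ((Real.sqrt (2 * Real.pi))⁻¹ * Real.exp (-(x ^ 2) / 2)) x := by
  have key : ∀ z : ℝ, stdNormalCDF z = (Real.sqrt (2 * Real.pi))⁻¹ *
      ((∫ y in Set.Iic (0:ℝ), Real.exp (-(y ^ 2) / 2)) + ∫ y in (0:ℝ)..z, Real.exp (-(y ^ 2) / 2)) := by
    intro z
    rw [stdNormalCDF]
    congr 1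
    have := intervalIntegral.integral_Iic_sub_Iic (a := (0:ℝ)) (b := z)
      (f := fun y => Real.exp (-(y ^ 2) / 2)) (μ := volume)
      gauss_integrable.integrableOn gauss_integrable.integrableOn
    linarith
  have hd : HasDerivAt (fun z => ∫ y in (0:ℝ)..z, Real.exp (-(y ^ 2) / 2))
      (Real.exp (-(x ^ 2) / 2)) x := by
    apply intervalIntegral.integral_hasDerivAt_right
      gauss_integrable.intervalIntegrable
      gauss_integrable.1.stronglyMeasurableAtFilter
    exact Continuous.continuousAt (by continuity)
  have := (hd.const_add (∫ y in Set.Iic (0:ℝ), Real.exp (-(y ^ 2) / 2))).const_mul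
      (Real.sqrt (2 * Real.pi))⁻¹
  refine this.congr_of_eventuallyEq ?_
  filter_upwards with z using (key z)

/-- The key Black–Scholes identity `S φ(d₁) = K φ(d₂)`. -/
lemma bs_identity (S K τ σ : ℝ) (hS : 0 < S) (hK : 0 < K) (hτ : 0 < τ) (hσ : 0 < σ) :
    S * Real.exp (-(((Real.log (S/K) + σ^2*τ/2)/(σ*Real.sqrt τ))^2)/2) =
    K * Real.exp (-(((Real.log (S/K) + σ^2*τ/2)/(σ*Real.sqrt τ) - σ*Real.sqrt τ)^2)/2) := by
  set st := Real.sqrt τ with hstdef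
  have hst : 0 < st := Real.sqrt_pos.2 hτ
  have hst2 : st^2 = τ := Real.sq_sqrt hτ.le
  set L := Real.log (S/K) with hLdef
  set d1 := (L + σ^2*τ/2)/(σ*st) with hd1def
  have hmul : d1 * (σ*st) = L + σ^2*τ/2 := by
    rw [hd1def]; field_simp
  have harg : -((d1 - σ*st)^2)/2 = L + (-(d1^2)/2) := by
    nlinarith [hmul, hst2]
  rw [harg, Real.exp_add, hLdef, Real.exp_log (by positivity)]
  field_simp

lemma deriv_combine (S K st e1 A B c : ℝ) (hid : S*A = K*B) :
    K*(c*B)*st = S*(c*A*e1) - K*(c*B*(e1-st)) := by linear_combination (-(c*e1))*hid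

lemma hasDerivAt_bsCall_sigma (S K τ : ℝ) (hS : 0 < S) (hK : 0 < K) (hτ : 0 < τ)
    (σ : ℝ) (hσ : 0 < σ) :
    ∃ D : ℝ, 0 ≤ D ∧ HasDerivAt (fun σ' => bsCall S K τ σ') D σ := by
  set st := Real.sqrt τ with hstdef
  have hst : 0 < st := Real.sqrt_pos.2 hτ
  set L := Real.log (S/K) with hLdef
  have hne : σ * st ≠ 0 := by positivity
  have hu : HasDerivAt (fun x : ℝ => L + x^2*τ/2) (σ*τ) σ := by
    have h := (((hasDerivAt_pow 2 σ).mul_const τ).div_const 2).const_add L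
    exact h.congr_deriv (by ring)
  have hv : HasDerivAt (fun x : ℝ => x * st) st σ := by
    simpa using (hasDerivAt_id σ).mul_const st
  have hd1 := hu.div hv hne
  have hd2 := hd1.sub hv
  have hF1 := ((hasDerivAt_stdNormalCDF ((L + σ^2*τ/2)/(σ*st))).comp σ hd1).const_mul S
  have hF2 := ((hasDerivAt_stdNormalCDF ((L + σ^2*τ/2)/(σ*st) - σ*st)).comp σ hd2).const_mul K
  have hT := hF1.sub hF2
  refine ⟨K * ((Real.sqrt (2*Real.pi))⁻¹ * Real.exp (-(((L + σ^2*τ/2)/(σ*st) - σ*st)^2)/2)) * st,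
    by positivity, ?_⟩
  have hfun : (fun σ' => bsCall S K τ σ') = (fun x : ℝ =>
      S * stdNormalCDF ((L + x^2*τ/2)/(x*st)) -
      K * stdNormalCDF ((L + x^2*τ/2)/(x*st) - x*st)) := rfl
  rw [hfun]
  refine hT.congr_deriv ?_
  exact (deriv_combine S K st _ _ _ _ (bs_identity S K τ σ hS hK hτ hσ)).symm

lemma bsCall_mono_sigma (S K τ : ℝ) (hS : 0 < S) (hK : 0 < K) (hτ : 0 < τ) :
    MonotoneOn (fun σ => bsCall S K τ σ) (Set.Ioi 0) := by
  apply monotoneOn_of_deriv_nonneg (convex_Ioi 0)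
  · intro σ hσ
    obtain ⟨D, _, hD⟩ := hasDerivAt_bsCall_sigma S K τ hS hK hτ σ hσ
    exact hD.continuousAt.continuousWithinAt
  · rw [interior_Ioi]
    intro σ hσ
    obtain ⟨D, _, hD⟩ := hasDerivAt_bsCall_sigma S K τ hS hK hτ σ hσ
    exact hD.differentiableAt.differentiableWithinAt
  · rw [interior_Ioi]
    intro σ hσ
    obtain ⟨D, hD0, hD⟩ := hasDerivAt_bsCall_sigma S K τ hS hK hτ σ hσ
    rw [hD.deriv]; exact hD0

lemma deriv_combine_S (S K e A B c F : ℝ) (hid : S*A = K*B) :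
    F = (1 * F + S * (c*A*e)) - K*(c*B*e) := by linear_combination (-(c*e))*hid

lemma hasDerivAt_bsCall_S (K τ σ : ℝ) (hK : 0 < K) (hτ : 0 < τ) (hσ : 0 < σ)
    (S : ℝ) (hS : 0 < S) :
    HasDerivAt (fun S' => bsCall S' K τ σ)
      (stdNormalCDF ((Real.log (S/K) + σ^2*τ/2)/(σ*Real.sqrt τ))) S := by
  set st := Real.sqrt τ with hstdef
  have hst : 0 < st := Real.sqrt_pos.2 hτ
  have hne : σ * st ≠ 0 := by positivity
  have hlog : HasDerivAt (fun x : ℝ => Real.log (x/K)) ((S/K)⁻¹ * (1/K)) S := by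
    have hdiv : HasDerivAt (fun x : ℝ => x/K) (1/K) S := by
      simpa using (hasDerivAt_id S).div_const K
    exact (Real.hasDerivAt_log (by positivity)).comp S hdiv
  have hd1 : HasDerivAt (fun x : ℝ => (Real.log (x/K) + σ^2*τ/2)/(σ*st))
      (((S/K)⁻¹ * (1/K))/(σ*st)) S := (hlog.add_const (σ^2*τ/2)).div_const (σ*st)
  have hd2 := hd1.sub_const (σ*st)
  have hF1 := (hasDerivAt_stdNormalCDF ((Real.log (S/K) + σ^2*τ/2)/(σ*st))).comp S hd1
  have hF2 := ((hasDerivAt_stdNormalCDF ((Real.log (S/K) + σ^2*τ/2)/(σ*st) - σ*st)).comp S hd2).const_mul K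
  have hT := ((hasDerivAt_id S).mul hF1).sub hF2
  have hfun : (fun S' => bsCall S' K τ σ) = (fun x : ℝ =>
      x * stdNormalCDF ((Real.log (x/K) + σ^2*τ/2)/(σ*st)) -
      K * stdNormalCDF ((Real.log (x/K) + σ^2*τ/2)/(σ*st) - σ*st)) := rfl
  rw [hfun]
  refine hT.congr_deriv ?_
  exact (deriv_combine_S S K _ _ _ _ _ (bs_identity S K τ σ hS hK hτ hσ)).symm

lemma bsCall_mono_S (K τ σ : ℝ) (hK : 0 < K) (hτ : 0 < τ) (hσ : 0 < σ) :
    MonotoneOn (fun S => bsCall S K τ σ) (Set.Ioi 0) := by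
  apply monotoneOn_of_deriv_nonneg (convex_Ioi 0)
  · exact fun S hS => (hasDerivAt_bsCall_S K τ σ hK hτ hσ S hS).continuousAt.continuousWithinAt
  · rw [interior_Ioi]
    exact fun S hS => (hasDerivAt_bsCall_S K τ σ hK hτ hσ S hS).differentiableAt.differentiableWithinAt
  · rw [interior_Ioi]
    intro S hS
    rw [(hasDerivAt_bsCall_S K τ σ hK hτ hσ S hS).deriv]
    exact stdNormalCDF_nonneg _

lemma bsPut_anti_S (K τ σ : ℝ) (hK : 0 < K) (hτ : 0 < τ) (hσ : 0 < σ) :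
    AntitoneOn (fun S => bsPut S K τ σ) (Set.Ioi 0) := by
  have hder : ∀ S ∈ Set.Ioi (0:ℝ), HasDerivAt (fun S' => bsPut S' K τ σ)
      (stdNormalCDF ((Real.log (S/K) + σ^2*τ/2)/(σ*Real.sqrt τ)) - 1) S := by
    intro S hS
    have h := ((hasDerivAt_bsCall_S K τ σ hK hτ hσ S hS).sub (hasDerivAt_id S)).add_const K
    simpa [bsPut] using h
  apply antitoneOn_of_deriv_nonpos (convex_Ioi 0)
  · exact fun S hS => (hder S hS).continuousAt.continuousWithinAt
  · rw [interior_Ioi]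
    exact fun S hS => (hder S hS).differentiableAt.differentiableWithinAt
  · rw [interior_Ioi]
    intro S hS
    rw [(hder S hS).deriv]
    have := stdNormalCDF_le_one ((Real.log (S/K) + σ^2*τ/2)/(σ*Real.sqrt τ))
    linarith

lemma bsCall_scale (S K τ σ c : ℝ) (hτ : 0 ≤ τ) (hc : 0 ≤ c) :
    bsCall S K τ (c*σ) = bsCall S K (c^2*τ) σ := by
  have h : Real.sqrt (c^2*τ) = c * Real.sqrt τ := by
    rw [Real.sqrt_mul (by positivity), Real.sqrt_sq hc]
  simp only [bsCall, h]
  ring_nf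

lemma bsPut_scale (S K τ σ c : ℝ) (hτ : 0 ≤ τ) (hc : 0 ≤ c) :
    bsPut S K τ (c*σ) = bsPut S K (c^2*τ) σ := by
  simp only [bsPut, bsCall_scale S K τ σ c hτ hc]

lemma exp_core {x y : ℝ} (hx : 0 < x) (hxy : x < y) :
    x * (1 - Real.exp (-y)) < y * (1 - Real.exp (-x)) := by
  have key : StrictMonoOn (fun t => t*(1-Real.exp (-x)) - x*(1-Real.exp (-t))) (Set.Ici x) := by
    apply strictMonoOn_of_deriv_pos (convex_Ici x)
    · fun_prop
    · rw [interior_Ici]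
      intro t ht
      have ht' : x < t := ht
      have hder : HasDerivAt (fun t => t*(1-Real.exp (-x)) - x*(1-Real.exp (-t)))
          ((1-Real.exp (-x)) - x*Real.exp (-t)) t := by
        have h1 : HasDerivAt (fun t : ℝ => t*(1-Real.exp (-x))) (1-Real.exp (-x)) t := by
          simpa using (hasDerivAt_id t).mul_const (1-Real.exp (-x))
        have h2 : HasDerivAt (fun t : ℝ => Real.exp (-t)) (-Real.exp (-t)) t := by
          exact ((Real.hasDerivAt_exp (-t)).comp t ((hasDerivAt_id t).neg)).congr_deriv (by simp)
        have h3 : HasDerivAt (fun t : ℝ => x*(1-Real.exp (-t))) (x*Real.exp (-t)) t := by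
          have := (h2.const_sub 1).const_mul x
          exact this.congr_deriv (by ring)
        exact h1.sub h3
      rw [hder.deriv]
      have hxe : x * Real.exp (-x) < 1 - Real.exp (-x) := by
        have h1 : x + 1 < Real.exp x := Real.add_one_lt_exp (ne_of_gt hx)
        have h2 : Real.exp (-x) * Real.exp x = 1 := by
          rw [← Real.exp_add]; simp
        nlinarith [Real.exp_pos (-x)]
      have hte : Real.exp (-t) < Real.exp (-x) := Real.exp_lt_exp.2 (by linarith)
      nlinarith
  have h := key (Set.self_mem_Ici) (Set.mem_Ici.2 hxy.le) hxy
  simp only at h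
  nlinarith [h]

lemma pclvgD_pos (σ1 σ2 U τ : ℝ) (h1 : 0 < σ1) (h2 : 0 < σ2) (hU : 0 < U) (hτ : 0 < τ) :
    0 < pclvgD σ1 σ2 U τ := by
  rw [pclvgD]
  have hE0 : 0 < Real.exp (-2*U/(σ1*τ)) := Real.exp_pos _
  have hE1 : Real.exp (-2*U/(σ1*τ)) < 1 := by
    apply Real.exp_lt_one_iff.2
    apply div_neg_of_neg_of_pos (by linarith) (by positivity)
  have ha : 0 < 1/σ1 := by positivity
  have hb : 0 < 1/σ2 := by positivity
  nlinarith

lemma pclvg_core (σ1 σ2 U Ki Kj τ : ℝ) (h1 : 0 < σ1) (h2 : 0 < σ2) (hτ : 0 < τ)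
    (hKi : 0 < Ki) (hiU : Ki < U) (hj : U + (U - Ki) * σ2 / σ1 ≤ Kj) :
    Ki / U * pclvgCall σ1 σ2 U Kj τ < pclvgPut σ1 σ2 U Ki τ := by
  have hU : 0 < U := hKi.trans hiU
  have hjU : U < Kj := by
    have h0 : 0 < U - Ki := by linarith
    have : 0 < (U - Ki) * σ2 / σ1 := by positivity
    linarith
  have hD := pclvgD_pos σ1 σ2 U τ h1 h2 hU hτ
  rw [pclvgPut, pclvgCall, pclvgCall, if_pos hiU, if_neg (not_lt.2 hjU.le)]
  set D := pclvgD σ1 σ2 U τ with hDdef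
  set x := 2*Ki/(σ1*τ) with hxdef
  set y := 2*U/(σ1*τ) with hydef
  have hx : 0 < x := by positivity
  have hxy : x < y := by
    rw [hxdef, hydef]
    gcongr
  have hy : 0 < y := hx.trans hxy
  have hax : -2 * Ki / (σ1 * τ) = -x := by rw [hxdef]; ring
  have hay : -2 * U / (σ1 * τ) = -y := by rw [hydef]; ring
  rw [hax, hay]
  set A := 1 - Real.exp (-x) with hAdef
  set B := 1 - Real.exp (-y) with hBdef
  have hA : 0 < A := by
    rw [hAdef]
    have := Real.exp_lt_one_iff.2 (by linarith : -x < 0)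
    linarith
  have hB : 0 < B := by
    rw [hBdef]
    have := Real.exp_lt_one_iff.2 (by linarith : -y < 0)
    linarith
  set E1 := Real.exp (-(U - Ki) / (σ1 * τ)) with hE1def
  set E2 := Real.exp (-(Kj - U) / (σ2 * τ)) with hE2def
  have hE1pos : 0 < E1 := by rw [hE1def]; exact Real.exp_pos _
  have hE21 : E2 ≤ E1 := by
    rw [hE1def, hE2def]
    apply Real.exp_le_exp.2
    rw [neg_div, neg_div, neg_le_neg_iff]
    rw [div_le_div_iff₀ (by positivity) (by positivity)]
    have hj' : (U - Ki) * σ2 ≤ (Kj - U) * σ1 := by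
      have h := (div_le_iff₀ h1).1 (by linarith : (U - Ki) * σ2 / σ1 ≤ Kj - U)
      linarith
    nlinarith [mul_le_mul_of_nonneg_right hj' hτ.le]
  have hcore : x * B < y * A := by
    rw [hAdef, hBdef]; exact exp_core hx hxy
  have hKiU : Ki / U * B < A := by
    have hq : Ki / U = x / y := by
      rw [hxdef, hydef]
      field_simp
    rw [hq, div_mul_eq_mul_div, div_lt_iff₀ hy]
    nlinarith [hcore]
  have hgoal : Ki / U * (τ * E2 * B / D) < τ * E1 * A / D := by
    rw [show Ki / U * (τ * E2 * B / D) = (Ki / U * (τ * E2 * B)) / D by ring]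
    rw [div_lt_div_iff_of_pos_right hD]
    calc Ki/U * (τ*E2*B) ≤ Ki/U * (τ*E1*B) := by
          have h' : τ*E2*B ≤ τ*E1*B :=
            mul_le_mul_of_nonneg_right (mul_le_mul_of_nonneg_left hE21 hτ.le) hB.le
          exact mul_le_mul_of_nonneg_left h' (by positivity)
      _ = τ*E1*(Ki/U*B) := by ring
      _ < τ*E1*A := mul_lt_mul_of_pos_left hKiU (mul_pos hτ hE1pos)
  linarith [hgoal]

/-- Positivity of the second RTIS portfolio: under upper beliefs generated by
a PCLVG dominating surface, with the spot at or below the barrier, the portfolio long a put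
struck at `K_i` and short `K_i/U` calls struck at `K_{j̄}` has a strictly positive price. -/
theorem rtis_second_portfolio_positive (n : ℕ) (K : Fin n → ℝ)
    (hKpos : ∀ j, 0 < K j) (hKmono : StrictMono K)
    (U : ℝ) (hU : 0 < U)
    (σs1 σs2 : ℝ) (h1 : 0 < σs1) (h2 : 0 < σs2)
    (IVstar : ℝ → ℝ → ℝ)
    (hIVstar : ∀ K' τ : ℝ, 0 < K' → 0 < τ → 0 < IVstar K' τ ∧
      bsCall U K' τ (IVstar K' τ) = pclvgCall σs1 σs2 U K' τ)
    (i jbar : Fin n) (hi : K i < U)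
    (hjbar1 : U + (U - K i) * σs2 / σs1 ≤ K jbar)
    (hjbar2 : ∀ j, U + (U - K i) * σs2 / σs1 ≤ K j → K jbar ≤ K j)
    (T : ℝ) (hT : 0 < T) (S : ℝ) (hS0 : 0 < S) (hSU : S ≤ U)
    (IV : Fin n → ℝ → ℝ) (hIVpos : ∀ j τ, 0 < τ → τ ≤ T → 0 < IV j τ)
    (hbeliefs : ∃ c : ℝ, 0 < c ∧ ∀ τ : ℝ, 0 < τ → τ ≤ T →
      (∀ i', K i' < U → c * IVstar (K i') (c ^ 2 * τ) ≤ IV i' τ) ∧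
      (∀ j, U < K j → IV j τ ≤ c * IVstar (K j) (c ^ 2 * τ))) :
    ∀ τ : ℝ, 0 < τ → τ ≤ T →
      0 < bsPut S (K i) τ (IV i τ) - K i / U * bsCall S (K jbar) τ (IV jbar τ) := by
  intro τ hτ0 hτT
  obtain ⟨c, hc, hbel⟩ := hbeliefs
  obtain ⟨hlow, hhigh⟩ := hbel τ hτ0 hτT
  have hKi := hKpos i
  have hKj := hKpos jbar
  have hjU : U < K jbar := by
    have h0 : 0 < U - K i := by linarith
    have : 0 < (U - K i) * σs2 / σs1 := by positivity
    linarith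
  have hc2τ : 0 < c ^ 2 * τ := by positivity
  obtain ⟨hvpos, hveq⟩ := hIVstar (K i) (c ^ 2 * τ) hKi hc2τ
  obtain ⟨hwpos, hweq⟩ := hIVstar (K jbar) (c ^ 2 * τ) hKj hc2τ
  set v := IVstar (K i) (c ^ 2 * τ) with hvdef
  set w := IVstar (K jbar) (c ^ 2 * τ) with hwdef
  have hplow : c * v ≤ IV i τ := hlow i hi
  have hchigh : IV jbar τ ≤ c * w := hhigh jbar hjU
  have hIVi : 0 < IV i τ := hIVpos i τ hτ0 hτT
  have hIVj : 0 < IV jbar τ := hIVpos jbar τ hτ0 hτT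
  have hcv : 0 < c * v := by positivity
  have hcw : 0 < c * w := by positivity
  -- put chain
  have hmono := bsCall_mono_sigma S (K i) τ hS0 hKi hτ0
  have hp1 : bsPut S (K i) τ (c * v) ≤ bsPut S (K i) τ (IV i τ) := by
    have h := hmono (Set.mem_Ioi.2 hcv) (Set.mem_Ioi.2 hIVi) hplow
    simp only [bsPut]
    simp only at h
    linarith
  have hp2 : bsPut S (K i) τ (c * v) = bsPut S (K i) (c ^ 2 * τ) v :=
    bsPut_scale S (K i) τ v c hτ0.le hc.le
  have hp3 : bsPut U (K i) (c ^ 2 * τ) v ≤ bsPut S (K i) (c ^ 2 * τ) v :=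
    bsPut_anti_S (K i) (c ^ 2 * τ) v hKi hc2τ hvpos (Set.mem_Ioi.2 hS0) (Set.mem_Ioi.2 hU) hSU
  have hp4 : bsPut U (K i) (c ^ 2 * τ) v = pclvgPut σs1 σs2 U (K i) (c ^ 2 * τ) := by
    rw [bsPut, hveq, pclvgPut]; ring
  -- call chain
  have g1 : bsCall S (K jbar) τ (IV jbar τ) ≤ bsCall S (K jbar) τ (c * w) :=
    bsCall_mono_sigma S (K jbar) τ hS0 hKj hτ0 (Set.mem_Ioi.2 hIVj) (Set.mem_Ioi.2 hcw) hchigh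
  have g2 : bsCall S (K jbar) τ (c * w) = bsCall S (K jbar) (c ^ 2 * τ) w :=
    bsCall_scale S (K jbar) τ w c hτ0.le hc.le
  have g3 : bsCall S (K jbar) (c ^ 2 * τ) w ≤ bsCall U (K jbar) (c ^ 2 * τ) w :=
    bsCall_mono_S (K jbar) (c ^ 2 * τ) w hKj hc2τ hwpos (Set.mem_Ioi.2 hS0) (Set.mem_Ioi.2 hU) hSU
  have hcore := pclvg_core σs1 σs2 U (K i) (K jbar) (c ^ 2 * τ) h1 h2 hc2τ hKi hi hjbar1
  have hmul : K i / U * bsCall S (K jbar) τ (IV jbar τ) ≤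
      K i / U * pclvgCall σs1 σs2 U (K jbar) (c ^ 2 * τ) := by
    apply mul_le_mul_of_nonneg_left ?_ (by positivity)
    calc bsCall S (K jbar) τ (IV jbar τ) ≤ bsCall S (K jbar) τ (c * w) := g1
      _ = bsCall S (K jbar) (c ^ 2 * τ) w := g2
      _ ≤ bsCall U (K jbar) (c ^ 2 * τ) w := g3
      _ = pclvgCall σs1 σs2 U (K jbar) (c ^ 2 * τ) := hweq
  linarith [hmul, hcore, hp1, hp2, hp3, hp4]
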